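/- The pushforward v ↦ v∘g is a linear bijection between real-analytic functions on J and even real-analytic functions on I: for every function W that is even and real-analytic on a neighborhood of I there exists a function v, real-analytic on a neighborhood of J, with W(x) = v(g(x)) for all x ∈ I, and v is uniquely determined on J; conversely, for every v real-analytic on a neighborhood of J, the composition v∘g is even and real-analytic on a neighborhood of I. -/

import Mathlib

open Set Filter Topology
open scoped NNReal ENNReal

lemma apply_const (p : FormalMultilinearSeries ℝ ℝ ℝ) (k : ℕ) (c : ℝ) :
    p k (fun _ => c) = c ^ k * p.coeff k := by
  have h := (p k).map_smul_univ (fun _ => c) (fun _ => (1:ℝ))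
  simp only [smul_eq_mul, mul_one, Finset.prod_const, Finset.card_univ, Fintype.card_fin] at h
  exact h

lemma analyticAt_local_inverse {f : ℝ → ℝ} {a : ℝ} (hf : AnalyticAt ℝ f a)
    (hd : deriv f a ≠ 0) :
    ∃ ψ : ℝ → ℝ, AnalyticAt ℝ ψ (f a) ∧ ψ (f a) = a ∧
      (∀ᶠ y in 𝓝 (f a), f (ψ y) = y) ∧ Filter.Tendsto ψ (𝓝 (f a)) (𝓝 a) := by
  obtain ⟨p, hp⟩ := hf
  set i : ℝ ≃L[ℝ] ℝ := ContinuousLinearEquiv.unitsEquivAut ℝ (Units.mk0 (deriv f a) hd) with hi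
  have heq : (continuousMultilinearCurryFin1 ℝ ℝ ℝ) (p 1) = (i : ℝ →L[ℝ] ℝ) := by
    ext
    have h1 : ∀ x : ℝ, p 1 (fun _ => x) = x ^ 1 * p.coeff 1 := fun x => apply_const p 1 x
    have h2 : p.coeff 1 = deriv f a := by
      rw [hp.deriv]; rfl
    simp [hi, ContinuousLinearEquiv.unitsEquivAut_apply, h1, h2, pow_one, mul_comm, Fin.snoc]
  have hst : HasStrictFDerivAt f (i : ℝ →L[ℝ] ℝ) a := heq ▸ hp.hasStrictFDerivAt
  have hp1 : p 1 = (continuousMultilinearCurryFin1 ℝ ℝ ℝ).symm i := by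
    rw [← heq]; simp
  set e := hst.toOpenPartialHomeomorph f with he
  have hsrc : a ∈ e.source := hst.mem_toOpenPartialHomeomorph_source
  have hcoe : (e : ℝ → ℝ) = f := hst.toOpenPartialHomeomorph_coe
  have han : AnalyticAt ℝ e.symm (f a) := by
    have := e.hasFPowerSeriesAt_symm hsrc (hcoe ▸ hp) hp1
    rw [hcoe] at this
    exact this.analyticAt
  refine ⟨e.symm, han, ?_, ?_, ?_⟩
  · have := e.left_inv hsrc
    rw [hcoe] at this; exact this
  · have := hst.eventually_right_inverse
    exact this
  · exact hst.localInverse_tendsto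


lemma analyticAt_sqrt {t : ℝ} (ht : 0 < t) : AnalyticAt ℝ Real.sqrt t := by
  have hsq : AnalyticAt ℝ (fun x : ℝ => x ^ 2) (Real.sqrt t) := by
    exact (analyticAt_id.pow 2)
  have hd : deriv (fun x : ℝ => x ^ 2) (Real.sqrt t) ≠ 0 := by
    have : deriv (fun x : ℝ => x ^ 2) (Real.sqrt t) = 2 * Real.sqrt t := by
      simp [deriv_pow, mul_comm]
    rw [this]
    positivity
  obtain ⟨ψ, han, hψa, hr, htd⟩ := analyticAt_local_inverse hsq hd
  have hts : Real.sqrt t ^ 2 = t := Real.sq_sqrt ht.le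
  rw [hts] at han hψa hr htd
  have hev : Real.sqrt =ᶠ[𝓝 t] ψ := by
    have h1 : ∀ᶠ y in 𝓝 t, 0 < ψ y := htd.eventually (eventually_gt_nhds (Real.sqrt_pos.2 ht))
    filter_upwards [h1, hr] with y h1y h2y
    rw [← Real.sqrt_sq h1y.le, h2y]
  exact han.congr hev.symm


lemma even_factor {f : ℝ → ℝ} (he : ∀ x, f (-x) = f x)
    (hf : AnalyticOnNhd ℝ f (Icc (-1) 1)) :
    ∃ f₁ : ℝ → ℝ, (∀ t ∈ Icc (0:ℝ) 1, AnalyticAt ℝ f₁ t) ∧ ∀ x : ℝ, f₁ (x ^ 2) = f x := by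
  obtain ⟨p, r, hp⟩ := hf 0 (by norm_num)
  obtain ⟨ρ, hρ0, hρr⟩ : ∃ ρ : ℝ≥0, 0 < ρ ∧ (ρ : ℝ≥0∞) < r := by
    rcases ENNReal.lt_iff_exists_nnreal_btwn.1 hp.r_pos with ⟨ρ, h1, h2⟩
    exact ⟨ρ, by exact_mod_cast h1, h2⟩
  have hρrad : (ρ : ℝ≥0∞) < p.radius := hρr.trans_le hp.r_le
  have hsum : Summable fun n => ‖p n‖ * (ρ:ℝ) ^ n := p.summable_norm_mul_pow hρrad
  -- odd coefficients vanish
  have hodd : ∀ m, Odd m → p.coeff m = 0 := by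
    set q : FormalMultilinearSeries ℝ ℝ ℝ := fun n => (-1 : ℝ) ^ n • p n with hq
    have hqr : (ρ : ℝ≥0∞) ≤ q.radius := by
      apply FormalMultilinearSeries.le_radius_of_summable_norm
      have heqn : (fun n => ‖q n‖ * (ρ:ℝ)^n) = fun n => ‖p n‖ * (ρ:ℝ)^n := by
        funext n
        congr 1
        show ‖(-1:ℝ)^n • p n‖ = ‖p n‖
        rw [norm_smul ((-1:ℝ)^n) (p n)]
        simp
      rw [heqn]; exact hsum
    have hqb : HasFPowerSeriesOnBall f q 0 ρ := by
      refine ⟨hqr, ENNReal.coe_pos.2 hρ0, fun {y} hy => ?_⟩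
      have hy' : -y ∈ Metric.eball (0:ℝ) r := by
        rw [mem_emetric_ball_zero_iff] at hy ⊢
        rw [enorm_neg]
        exact hy.trans hρr
      have hS := hp.hasSum hy'
      have heq : ∀ n : ℕ, p n (fun _ => -y) = q n (fun _ => y) := by
        intro n
        rw [apply_const, hq]
        simp only [ContinuousMultilinearMap.smul_apply, smul_eq_mul]
        rw [apply_const]
        ring
      simp only [heq] at hS
      have : f (0 + -y) = f (0 + y) := by
        rw [zero_add, zero_add]; exact he y
      rwa [this] at hS
    have hpq : p = q :=
      hp.hasFPowerSeriesAt.eq_formalMultilinearSeries hqb.hasFPowerSeriesAt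
    intro m hm
    have h1 : p.coeff m = q.coeff m := by rw [hpq]
    have h2 : q.coeff m = (-1:ℝ)^m * p.coeff m := by
      show q m (1 : Fin m → ℝ) = _
      rw [hq]
      simp only [ContinuousMultilinearMap.smul_apply, smul_eq_mul]
      rfl
    rw [hm.neg_one_pow] at h2
    rw [h2] at h1
    linarith
  -- the new series
  set s : FormalMultilinearSeries ℝ ℝ ℝ :=
    fun n => ContinuousMultilinearMap.mkPiRing ℝ (Fin n) (p.coeff (2*n)) with hs
  have hs_apply : ∀ (n : ℕ) (t : ℝ), s n (fun _ => t) = p.coeff (2*n) * t^n := by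
    intro n t
    show ContinuousMultilinearMap.mkPiRing ℝ (Fin n) (p.coeff (2*n)) (fun _ => t) = _
    rw [ContinuousMultilinearMap.mkPiRing_apply]
    simp only [smul_eq_mul, Finset.prod_const, Finset.card_univ, Fintype.card_fin]
    ring
  have hs_norm : ∀ n, ‖s n‖ = ‖p.coeff (2*n)‖ := by
    intro n
    show ‖ContinuousMultilinearMap.mkPiRing ℝ (Fin n) (p.coeff (2*n))‖ = _
    exact ContinuousMultilinearMap.norm_mkPiRing _
  have hcoeff_le : ∀ m, ‖p.coeff m‖ ≤ ‖p m‖ := by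
    intro m
    have h := (p m).le_opNorm (fun _ => (1:ℝ))
    simp only [norm_one, Finset.prod_const, one_pow, mul_one] at h
    exact h
  have hsub : Summable (fun n => ‖p (2*n)‖ * (ρ:ℝ)^(2*n)) :=
    hsum.comp_injective (fun a b h => by
      have h' : 2*a = 2*b := h
      omega)
  have hs_sum : Summable (fun n => ‖s n‖ * ((ρ:ℝ)^2)^n) := by
    refine Summable.of_nonneg_of_le (fun n => by positivity) (fun n => ?_) hsub
    rw [hs_norm, ← pow_mul]
    exact mul_le_mul_of_nonneg_right (hcoeff_le _) (by positivity)
  -- definition of f₁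
  set f₁ : ℝ → ℝ :=
    fun t => if 0 ≤ t then f (Real.sqrt t) else ∑' n, p.coeff (2*n) * t^n with hf₁
  have hxsq : ∀ x : ℝ, f₁ (x ^ 2) = f x := by
    intro x
    rw [hf₁]
    simp only [sq_nonneg, if_pos, Real.sqrt_sq_eq_abs]
    rcases abs_cases x with ⟨h, _⟩ | ⟨h, _⟩
    · rw [h]
    · rw [h]; exact he x
  have hterm_sum : ∀ y : ℝ, |y| < (ρ:ℝ)^2 → Summable (fun n => p.coeff (2*n) * y^n) := by
    intro y hy
    refine Summable.of_norm_bounded hsub (fun n => ?_)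
    calc ‖p.coeff (2*n) * y^n‖ = ‖p.coeff (2*n)‖ * ‖y‖^n := by rw [norm_mul, norm_pow]
    _ ≤ ‖p (2*n)‖ * ((ρ:ℝ)^2)^n := by
        refine mul_le_mul (hcoeff_le _) (pow_le_pow_left₀ (norm_nonneg y) ?_ n)
          (by positivity) (norm_nonneg _)
        rw [Real.norm_eq_abs]; exact hy.le
    _ = ‖p (2*n)‖ * (ρ:ℝ)^(2*n) := by rw [← pow_mul]
  have hkey : ∀ y : ℝ, |y| < (ρ:ℝ)^2 → HasSum (fun n => p.coeff (2*n) * y^n) (f₁ y) := by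
    intro y hy
    rcases le_or_gt 0 y with hy0 | hy0
    · have hsqy : Real.sqrt y < (ρ:ℝ) := by
        have : Real.sqrt y < Real.sqrt ((ρ:ℝ)^2) := by
          apply Real.sqrt_lt_sqrt hy0
          calc y ≤ |y| := le_abs_self y
          _ < _ := hy
        rwa [Real.sqrt_sq ρ.coe_nonneg] at this
      have hmem : Real.sqrt y ∈ Metric.eball (0:ℝ) r := by
        rw [mem_emetric_ball_zero_iff]
        refine lt_trans ?_ hρr
        rw [show ((ρ:ℝ≥0∞)) = ((ρ:ℝ≥0):ℝ≥0∞) from rfl]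
        rw [enorm_eq_nnnorm, ENNReal.coe_lt_coe]
        rw [← NNReal.coe_lt_coe]
        simpa [Real.norm_eq_abs, abs_of_nonneg (Real.sqrt_nonneg y)] using hsqy
      have hS := hp.hasSum hmem
      simp only [zero_add] at hS
      have heqt : ∀ m : ℕ, p m (fun _ => Real.sqrt y) = (Real.sqrt y)^m * p.coeff m :=
        fun m => apply_const p m _
      simp only [heqt] at hS
      have hz : ∀ m, m ∉ Set.range (fun n : ℕ => 2*n) →
          (Real.sqrt y)^m * p.coeff m = 0 := by
        intro m hm
        have hoddm : Odd m := by
          rcases Nat.even_or_odd m with hev | hod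
          · obtain ⟨k, hk⟩ := hev
            exact absurd ⟨k, by show 2*k = m; omega⟩ hm
          · exact hod
        rw [hodd m hoddm, mul_zero]
      have hinj : Function.Injective (fun n : ℕ => 2*n) := fun a b h => by
        have h' : 2*a = 2*b := h
        omega
      have hS2 := (hinj.hasSum_iff hz).2 hS
      have heq2 : ∀ n : ℕ, (Real.sqrt y)^(2*n) * p.coeff (2*n) = p.coeff (2*n) * y^n := by
        intro n
        rw [pow_mul, Real.sq_sqrt hy0, mul_comm]
      simp only [Function.comp_def] at hS2
      simp only [heq2] at hS2
      have hfval : f₁ y = f (Real.sqrt y) := by simp only [hf₁]; rw [if_pos hy0]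
      rwa [hfval]
    · have hfval : f₁ y = ∑' n, p.coeff (2*n) * y^n := by
        simp only [hf₁]; rw [if_neg (not_le.2 hy0)]
      rw [hfval]
      exact (hterm_sum y hy).hasSum
  have han0 : AnalyticAt ℝ f₁ 0 := by
    refine ⟨s, ((ρ^2 : ℝ≥0) : ℝ≥0∞), ?_⟩
    refine ⟨?_, ?_, ?_⟩
    · apply FormalMultilinearSeries.le_radius_of_summable_norm
      have hc : ((ρ^2 : ℝ≥0) : ℝ) = (ρ:ℝ)^2 := by push_cast; ring
      rw [hc]
      exact hs_sum
    · exact ENNReal.coe_pos.2 (pow_pos hρ0 2)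
    · intro y hy
      rw [mem_emetric_ball_zero_iff] at hy
      have hy' : |y| < (ρ:ℝ)^2 := by
        rw [enorm_eq_nnnorm, ENNReal.coe_lt_coe] at hy
        have h2 := NNReal.coe_lt_coe.2 hy
        simpa [Real.norm_eq_abs] using h2
      have hk := hkey y hy'
      simp only [zero_add]
      have hterm : (fun n => s n fun _ => y) = fun n => p.coeff (2*n) * y^n := by
        funext n; exact hs_apply n y
      rw [hterm]
      exact hk
  have hanpos : ∀ t ∈ Icc (0:ℝ) 1, 0 < t → AnalyticAt ℝ f₁ t := by
    intro t ht ht0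
    have hsq01 : Real.sqrt t ∈ Icc (-1:ℝ) 1 := by
      constructor
      · linarith [Real.sqrt_nonneg t]
      · exact Real.sqrt_le_one.mpr ht.2
    have hcomp : AnalyticAt ℝ (fun u => f (Real.sqrt u)) t :=
      (hf _ hsq01).comp (analyticAt_sqrt ht0)
    apply hcomp.congr
    filter_upwards [eventually_gt_nhds ht0] with u hu
    rw [hf₁]; simp [hu.le]
  refine ⟨f₁, fun t ht => ?_, hxsq⟩
  rcases eq_or_lt_of_le ht.1 with h0 | h0
  · rw [← h0]; exact han0
  · exact hanpos t ht h0


/-- Let `I = [-1,1]` and let `g : ℝ → ℝ` be real-analytic on a neighborhood of `I`, even,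
strictly decreasing on `[0,1]`, with `g''(0) ≠ 0` and `g'(x) ≠ 0` for `x ∈ (0,1]`; let
`J := g(I) = [g(1), g(0)]`.  The pushforward `v ↦ v ∘ g` is a linear bijection between
real-analytic functions on `J` and even real-analytic functions on `I`: every even `W`
real-analytic on a neighborhood of `I` is of the form `W = v ∘ g` on `I` for some `v`
real-analytic on a neighborhood of `J`, uniquely determined on `J`; conversely `v ∘ g` is
even and real-analytic on a neighborhood of `I` for every such `v`. -/
theorem stmt7
    (g : ℝ → ℝ)
    (hg_an : AnalyticOnNhd ℝ g (Icc (-1) 1))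
    (hg_even : ∀ x : ℝ, g (-x) = g x)
    (hg_anti : StrictAntiOn g (Icc 0 1))
    (hg'' : iteratedDeriv 2 g 0 ≠ 0)
    (hg' : ∀ x ∈ Ioc (0 : ℝ) 1, deriv g x ≠ 0)
    (J : Set ℝ) (hJ : J = Icc (g 1) (g 0)) :
    (∀ W : ℝ → ℝ, (∀ x : ℝ, W (-x) = W x) → AnalyticOnNhd ℝ W (Icc (-1) 1) →
      ∃ v : ℝ → ℝ, AnalyticOnNhd ℝ v J ∧ (∀ x ∈ Icc (-1 : ℝ) 1, W x = v (g x)) ∧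
        ∀ v' : ℝ → ℝ, AnalyticOnNhd ℝ v' J → (∀ x ∈ Icc (-1 : ℝ) 1, W x = v' (g x)) →
          EqOn v v' J) ∧
    (∀ v : ℝ → ℝ, AnalyticOnNhd ℝ v J →
      (∀ x : ℝ, (v ∘ g) (-x) = (v ∘ g) x) ∧ AnalyticOnNhd ℝ (v ∘ g) (Icc (-1) 1)) := by
  have hg01 : g 1 < g 0 :=
    hg_anti ⟨le_refl 0, zero_le_one⟩ ⟨zero_le_one, le_refl 1⟩ zero_lt_one
  constructor
  · intro W hWe hWan
    obtain ⟨W₁, hW₁an, hW₁eq⟩ := even_factor hWe hWan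
    obtain ⟨g₁, hg₁an, hg₁eq⟩ := even_factor hg_even hg_an
    have hgfun : ∀ x : ℝ, g x = g₁ (x^2) := fun x => (hg₁eq x).symm
    have e1 : g₁ 1 = g 1 := by have := hg₁eq 1; rwa [one_pow] at this
    have e0 : g₁ 0 = g 0 := by
      have := hg₁eq 0; rwa [show (0:ℝ)^2 = 0 by norm_num] at this
    set U : Set ℝ := {t | AnalyticAt ℝ g₁ t} with hU
    have hUopen : IsOpen U := isOpen_analyticAt ℝ g₁
    have hUan : AnalyticOnNhd ℝ g₁ U := fun t ht => ht
    have hUderiv : AnalyticOnNhd ℝ (deriv g₁) U := hUan.deriv_of_isOpen hUopen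
    have hchain : ∀ x : ℝ, x^2 ∈ U → deriv g x = deriv g₁ (x^2) * (2*x) := by
      intro x hx
      have h1 : HasDerivAt (fun u : ℝ => u^2) (2*x) x := by
        simpa using hasDerivAt_pow 2 x
      have h2 : HasDerivAt g₁ (deriv g₁ (x^2)) (x^2) :=
        (hx : AnalyticAt ℝ g₁ (x^2)).differentiableAt.hasDerivAt
      have h3 := HasDerivAt.comp_of_eq x h2 h1 rfl
      have h4 : HasDerivAt g (deriv g₁ (x^2) * (2*x)) x := by
        have hfun : g = g₁ ∘ fun u : ℝ => u^2 := funext hgfun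
        rw [hfun]; exact h3
      exact h4.deriv
    have h0U : (0:ℝ) ∈ U := hg₁an 0 ⟨le_refl 0, zero_le_one⟩
    have hd0 : deriv g₁ 0 ≠ 0 := by
      intro hzero
      apply hg''
      have hDan : AnalyticAt ℝ (deriv g₁) 0 := hUderiv 0 h0U
      have hev : ∀ᶠ x : ℝ in 𝓝 0, x^2 ∈ U := by
        have hc : ContinuousAt (fun x : ℝ => x^2) 0 := by fun_prop
        have := hc.preimage_mem_nhds (hUopen.mem_nhds (by simpa using h0U))
        exact this
      have hev2 : deriv g =ᶠ[𝓝 0] fun x => deriv g₁ (x^2) * (2*x) := by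
        filter_upwards [hev] with x hx using hchain x hx
      have hrw : iteratedDeriv 2 g 0 = deriv (fun x => deriv g₁ (x^2) * (2*x)) 0 := by
        rw [show (2:ℕ) = 1 + 1 from rfl, iteratedDeriv_succ, iteratedDeriv_one]
        exact hev2.deriv_eq
      rw [hrw]
      have hu : HasDerivAt (fun x : ℝ => deriv g₁ (x^2)) (deriv (deriv g₁) 0 * (2*0)) 0 := by
        have h2 : HasDerivAt (deriv g₁) (deriv (deriv g₁) 0) ((0:ℝ)^2) := by
          rw [show ((0:ℝ)^2) = 0 by norm_num]
          exact hDan.differentiableAt.hasDerivAt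
        have h1 : HasDerivAt (fun u : ℝ => u^2) (2*0) 0 := by
          simpa using hasDerivAt_pow 2 (0:ℝ)
        exact HasDerivAt.comp_of_eq 0 h2 h1 rfl
      have hv : HasDerivAt (fun x : ℝ => 2*x) 2 0 := by
        simpa using (hasDerivAt_id (0:ℝ)).const_mul 2
      rw [show (fun x => deriv g₁ (x^2) * (2*x)) = ((fun x : ℝ => deriv g₁ (x^2)) * fun x : ℝ => 2*x) from rfl, (hu.mul hv).deriv]
      rw [show ((0:ℝ)^2) = 0 by norm_num, hzero]
      ring
    have hdpos : ∀ t ∈ Icc (0:ℝ) 1, deriv g₁ t ≠ 0 := by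
      intro t ht
      rcases eq_or_lt_of_le ht.1 with h0 | h0
      · rw [← h0]; exact hd0
      · have hx : Real.sqrt t ∈ Ioc (0:ℝ) 1 :=
          ⟨Real.sqrt_pos.2 h0, Real.sqrt_le_one.mpr ht.2⟩
        have hsq : (Real.sqrt t)^2 = t := Real.sq_sqrt h0.le
        have hmem : (Real.sqrt t)^2 ∈ U := by rw [hsq]; exact hg₁an t ht
        have hch := hchain (Real.sqrt t) hmem
        rw [hsq] at hch
        have hgd := hg' (Real.sqrt t) hx
        intro hzero
        rw [hch, hzero, zero_mul] at hgd
        exact hgd rfl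
    set V : Set ℝ := U ∩ (deriv g₁) ⁻¹' {0}ᶜ with hV
    have hVopen : IsOpen V :=
      (hUderiv.continuousOn).isOpen_inter_preimage hUopen isOpen_compl_singleton
    have hsubV : Icc (0:ℝ) 1 ⊆ V := fun t ht => ⟨hg₁an t ht, hdpos t ht⟩
    obtain ⟨δ, hδ0, hδ⟩ :=
      (isCompact_Icc : IsCompact (Icc (0:ℝ) 1)).exists_thickening_subset_open hVopen hsubV
    set ε := δ/2 with hε
    have hε0 : 0 < ε := half_pos hδ0
    have hKV : Icc (-ε) (1+ε) ⊆ V := by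
      intro x hx
      apply hδ
      rw [Metric.mem_thickening_iff]
      refine ⟨max 0 (min 1 x), ⟨le_max_left _ _, max_le zero_le_one (min_le_left _ _)⟩, ?_⟩
      rw [Real.dist_eq]
      rcases le_total x 0 with h | h
      · rw [min_eq_right (h.trans zero_le_one), max_eq_left h]
        rw [abs_of_nonpos (by linarith)]
        have := hx.1
        simp only [hε] at this ⊢
        linarith
      · rcases le_total x 1 with h1 | h1
        · rw [min_eq_right h1, max_eq_right h]
          simpa using hδ0
        · rw [min_eq_left h1, max_eq_right zero_le_one]
          rw [abs_of_nonneg (by linarith)]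
          have := hx.2
          simp only [hε] at this ⊢
          linarith
    have hK'an : ∀ t ∈ Icc (-ε) (1+ε), AnalyticAt ℝ g₁ t := fun t ht => (hKV ht).1
    have hK'd : ∀ t ∈ Icc (-ε) (1+ε), deriv g₁ t ≠ 0 := fun t ht => (hKV ht).2
    have hK'cont : ContinuousOn g₁ (Icc (-ε) (1+ε)) := fun t ht =>
      ((hK'an t ht).continuousAt).continuousWithinAt
    have hK'dcont : ContinuousOn (deriv g₁) (Icc (-ε) (1+ε)) := fun t ht =>
      ((hUderiv _ (hKV ht).1).continuousAt).continuousWithinAt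
    obtain ⟨c, hc, hcval⟩ := exists_deriv_eq_slope g₁ zero_lt_one
      (hK'cont.mono (Icc_subset_Icc (by linarith) (by linarith)))
      (fun x hx => ((hK'an x ⟨by linarith [hx.1], by linarith [hx.2]⟩).differentiableAt).differentiableWithinAt)
    have hg₁01 : g₁ 1 < g₁ 0 := by rw [e1, e0]; exact hg01
    have hcneg : deriv g₁ c < 0 := by
      rw [hcval]
      simp only [sub_zero, div_one]
      linarith
    have hcK : c ∈ Icc (-ε) (1+ε) := ⟨by linarith [hc.1], by linarith [hc.2]⟩
    have hneg : ∀ t ∈ Icc (-ε) (1+ε), deriv g₁ t < 0 := by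
      intro t ht
      rcases lt_or_ge (deriv g₁ t) 0 with h | h
      · exact h
      exfalso
      have hpos : 0 < deriv g₁ t := lt_of_le_of_ne h (Ne.symm (hK'd t ht))
      have hsub2 : uIcc c t ⊆ Icc (-ε) (1+ε) := by
        rw [show Icc (-ε) (1+ε) = uIcc (-ε) (1+ε) from (uIcc_of_le (by linarith)).symm]
        exact uIcc_subset_uIcc (by rw [uIcc_of_le (by linarith)]; exact hcK)
          (by rw [uIcc_of_le (by linarith)]; exact ht)
      obtain ⟨z, hz, hz0⟩ := intermediate_value_uIcc (hK'dcont.mono hsub2)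
        (show (0:ℝ) ∈ uIcc (deriv g₁ c) (deriv g₁ t) from by
          rw [mem_uIcc]; left; exact ⟨hcneg.le, hpos.le⟩)
      exact (hK'd z (hsub2 hz)) hz0
    have hanti : StrictAntiOn g₁ (Icc (-ε) (1+ε)) := by
      apply strictAntiOn_of_deriv_neg (convex_Icc _ _) hK'cont
      intro t ht
      rw [interior_Icc] at ht
      exact hneg t ⟨ht.1.le, ht.2.le⟩
    have hinj := hanti.injOn
    have himg : Icc (g₁ (1+ε)) (g₁ (-ε)) ⊆ g₁ '' Icc (-ε) (1+ε) :=
      intermediate_value_Icc' (by linarith) hK'cont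
    set φ : ℝ → ℝ := fun y => Function.invFunOn g₁ (Icc (-ε) (1+ε)) y with hφdef
    have hφ_spec : ∀ y ∈ Icc (g₁ (1+ε)) (g₁ (-ε)),
        φ y ∈ Icc (-ε) (1+ε) ∧ g₁ (φ y) = y := by
      intro y hy
      obtain ⟨x, hxm, hxy⟩ := himg hy
      exact ⟨Function.invFunOn_mem ⟨x, hxm, hxy⟩, Function.invFunOn_eq ⟨x, hxm, hxy⟩⟩
    have hJsub : J ⊆ Ioo (g₁ (1+ε)) (g₁ (-ε)) := by
      intro y hy
      rw [hJ] at hy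
      constructor
      · calc g₁ (1+ε) < g₁ 1 := hanti ⟨by linarith, by linarith⟩
              ⟨by linarith, le_refl _⟩ (by linarith)
        _ = g 1 := e1
        _ ≤ y := hy.1
      · calc y ≤ g 0 := hy.2
        _ = g₁ 0 := e0.symm
        _ < g₁ (-ε) := hanti ⟨le_refl _, by linarith⟩ ⟨by linarith, by linarith⟩ (by linarith)
    have hφJ : ∀ y ∈ J, φ y ∈ Icc (0:ℝ) 1 ∧ g₁ (φ y) = y := by
      intro y hy
      have hy' : y ∈ Icc (g₁ (1+ε)) (g₁ (-ε)) := Ioo_subset_Icc_self (hJsub hy)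
      obtain ⟨hmem, heq⟩ := hφ_spec y hy'
      have hyJ' := hy
      rw [hJ] at hyJ'
      refine ⟨⟨?_, ?_⟩, heq⟩
      · by_contra hcon
        push_neg at hcon
        have h0K : (0:ℝ) ∈ Icc (-ε) (1+ε) := ⟨by linarith, by linarith⟩
        have hlt := hanti hmem h0K hcon
        rw [heq] at hlt
        rw [← e0] at hyJ'
        linarith [hyJ'.2]
      · by_contra hcon
        push_neg at hcon
        have h1K : (1:ℝ) ∈ Icc (-ε) (1+ε) := ⟨by linarith, by linarith⟩
        have hlt := hanti h1K hmem hcon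
        rw [heq] at hlt
        rw [← e1] at hyJ'
        linarith [hyJ'.1]
    have hmain : ∀ x ∈ Icc (-1:ℝ) 1, W x = (W₁ ∘ φ) (g x) := by
      intro x hx
      have hx2 : x^2 ∈ Icc (0:ℝ) 1 :=
        ⟨sq_nonneg x, by
          have : |x| ≤ 1 := abs_le.2 hx
          calc x^2 = |x|^2 := (sq_abs x).symm
          _ ≤ 1^2 := pow_le_pow_left₀ (abs_nonneg x) this 2
          _ = 1 := one_pow 2⟩
      have hx2K : x^2 ∈ Icc (-ε) (1+ε) := ⟨by linarith [hx2.1], by linarith [hx2.2]⟩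
      have h1 : φ (g₁ (x^2)) ∈ Icc (-ε) (1+ε) := Function.invFunOn_mem ⟨x^2, hx2K, rfl⟩
      have h2 : g₁ (φ (g₁ (x^2))) = g₁ (x^2) := Function.invFunOn_eq ⟨x^2, hx2K, rfl⟩
      have h3 : φ (g₁ (x^2)) = x^2 := hinj h1 hx2K h2
      show W x = W₁ (φ (g x))
      rw [hgfun x, h3, hW₁eq x]
    refine ⟨W₁ ∘ φ, ?_, hmain, ?_⟩
    · intro y hy
      obtain ⟨hφ01, hgφ⟩ := hφJ y hy
      have htK : φ y ∈ Icc (-ε) (1+ε) := ⟨by linarith [hφ01.1], by linarith [hφ01.2]⟩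
      obtain ⟨ψ, hψan, hψval, hψright, hψtendsto⟩ :=
        analyticAt_local_inverse (hK'an (φ y) htK) (hK'd (φ y) htK)
      rw [hgφ] at hψan hψval hψright hψtendsto
      have hφψ : φ =ᶠ[𝓝 y] ψ := by
        have hy_opn : ∀ᶠ z in 𝓝 y, z ∈ Ioo (g₁ (1+ε)) (g₁ (-ε)) :=
          eventually_of_mem (isOpen_Ioo.mem_nhds (hJsub hy)) (fun z hz => hz)
        have hψ_in : ∀ᶠ z in 𝓝 y, ψ z ∈ Ioo (-ε) (1+ε) :=
          hψtendsto (isOpen_Ioo.mem_nhds ⟨by linarith [hφ01.1], by linarith [hφ01.2]⟩)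
        filter_upwards [hy_opn, hψright, hψ_in] with z hz1 hz2 hz3
        have hz1' : z ∈ Icc (g₁ (1+ε)) (g₁ (-ε)) := Ioo_subset_Icc_self hz1
        obtain ⟨hm, he2⟩ := hφ_spec z hz1'
        exact hinj hm (Ioo_subset_Icc_self hz3) (he2.trans hz2.symm)
      have hWt : AnalyticAt ℝ W₁ (φ y) := hW₁an (φ y) hφ01
      have hcomp : AnalyticAt ℝ (W₁ ∘ ψ) y :=
        AnalyticAt.comp (by rw [hψval]; exact hWt) hψan
      apply hcomp.congr
      filter_upwards [hφψ] with z hz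
      show W₁ (ψ z) = W₁ (φ z)
      rw [hz]
    · intro v' hv'an hv'eq y hyJ
      have hgan01 : AnalyticOnNhd ℝ g (Icc (0:ℝ) 1) := fun x hx =>
        hg_an x ⟨by linarith [hx.1], hx.2⟩
      have hgcont : ContinuousOn g (Icc (0:ℝ) 1) := hgan01.continuousOn
      have hsurj : Icc (g 1) (g 0) ⊆ g '' Icc 0 1 := intermediate_value_Icc' zero_le_one hgcont
      have hyJ' := hyJ
      rw [hJ] at hyJ'
      obtain ⟨x, hx01, hgx⟩ := hsurj hyJ'
      have hxI : x ∈ Icc (-1:ℝ) 1 := ⟨by linarith [hx01.1], hx01.2⟩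
      calc (W₁ ∘ φ) y = (W₁ ∘ φ) (g x) := by rw [hgx]
      _ = W x := (hmain x hxI).symm
      _ = v' (g x) := hv'eq x hxI
      _ = v' y := by rw [hgx]
  · intro v hv
    have hmap : ∀ x ∈ Icc (-1:ℝ) 1, g x ∈ J := by
      intro x hx
      rw [hJ]
      have habs : |x| ∈ Icc (0:ℝ) 1 := ⟨abs_nonneg x, abs_le.2 hx⟩
      have hgeq : g |x| = g x := by
        rcases abs_cases x with ⟨h, _⟩ | ⟨h, _⟩
        · rw [h]
        · rw [h]; exact hg_even x
      constructor
      · rw [← hgeq]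
        exact hg_anti.antitoneOn habs ⟨zero_le_one, le_refl 1⟩ habs.2
      · rw [← hgeq]
        exact hg_anti.antitoneOn ⟨le_refl 0, zero_le_one⟩ habs habs.1
    refine ⟨fun x => ?_, fun x hx => ?_⟩
    · show v (g (-x)) = v (g x)
      rw [hg_even x]
    · exact (hv (g x) (hmap x hx)).comp (hg_an x hx)
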